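/- (Identification.) Let Φ be an m×d real matrix with restricted isometry constants satisfying δ_{2s} ≤ δ_{4s} ≤ 0.1. Let r ∈ ℝ^d be a 2s-sparse vector, let e ∈ ℝ^m, set v = Φr + e and form the signal proxy y = Φ*v. Let Ω ⊆ {1,…,d} be a set of 2s coordinates of y of largest magnitude. Then ‖r|_{Ω^c}‖₂ ≤ 0.2223 ‖r‖₂ + 2.34 ‖e‖₂. -/
import Mathlib


/-- The Euclidean (ℓ2) norm of a finitely-indexed real vector. -/
noncomputable def l2 {ι : Type*} [Fintype ι] (v : ι → ℝ) : ℝ :=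
  Real.sqrt (∑ i, (v i) ^ 2)

/-- A vector is `s`-sparse if it has at most `s` nonzero coordinates. -/
def Sparse {d : ℕ} (s : ℕ) (v : Fin d → ℝ) : Prop :=
  {i | v i ≠ 0}.ncard ≤ s

/-- `δ` satisfies the restricted isometry inequalities of `Φ` at sparsity level `r`
(quadratic form); `δ_r ≤ δ` is equivalent to this (for `δ ≥ 0`). -/
def RICq {m d : ℕ} (Φ : Matrix (Fin m) (Fin d) ℝ) (r : ℕ) (δ : ℝ) : Prop :=
  ∀ v : Fin d → ℝ, Sparse r v →
    (1 - δ) * (l2 v) ^ 2 ≤ (l2 (Φ.mulVec v)) ^ 2 ∧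
      (l2 (Φ.mulVec v)) ^ 2 ≤ (1 + δ) * (l2 v) ^ 2

open Finset Matrix

lemma l2_nonneg {ι : Type*} [Fintype ι] (v : ι → ℝ) : 0 ≤ l2 v := Real.sqrt_nonneg _

lemma l2_sq {ι : Type*} [Fintype ι] (v : ι → ℝ) : (l2 v) ^ 2 = ∑ i, (v i) ^ 2 :=
  Real.sq_sqrt (Finset.sum_nonneg fun i _ => sq_nonneg _)

lemma l2_eq_zero {ι : Type*} [Fintype ι] {v : ι → ℝ} (h : l2 v = 0) : v = 0 := by
  funext i
  have h2 : ∑ j, (v j) ^ 2 = 0 := by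
    have := l2_sq v; rw [h] at this; simpa using this.symm
  have h3 := (Finset.sum_eq_zero_iff_of_nonneg (fun j _ => sq_nonneg (v j))).mp h2 i
    (Finset.mem_univ i)
  have := pow_eq_zero_iff (two_ne_zero) |>.mp h3
  simpa using this

lemma l2_eq_norm {ι : Type*} [Fintype ι] (v : ι → ℝ) :
    l2 v = ‖(WithLp.equiv 2 (ι → ℝ)).symm v‖ := by
  rw [EuclideanSpace.norm_eq]
  simp [l2, sq_abs]

lemma l2_add_le {ι : Type*} [Fintype ι] (u v : ι → ℝ) : l2 (u + v) ≤ l2 u + l2 v := by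
  rw [l2_eq_norm, l2_eq_norm, l2_eq_norm]
  have : (WithLp.equiv 2 (ι → ℝ)).symm (u + v)
      = (WithLp.equiv 2 (ι → ℝ)).symm u + (WithLp.equiv 2 (ι → ℝ)).symm v := rfl
  rw [this]
  exact norm_add_le _ _

lemma l2_neg {ι : Type*} [Fintype ι] (v : ι → ℝ) : l2 (-v) = l2 v := by
  simp [l2]

lemma l2_smul {ι : Type*} [Fintype ι] (c : ℝ) (v : ι → ℝ) : l2 (c • v) = |c| * l2 v := by
  simp only [l2, Pi.smul_apply, smul_eq_mul, mul_pow, ← Finset.mul_sum]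
  rw [Real.sqrt_mul (sq_nonneg c), Real.sqrt_sq_eq_abs]

lemma sparse_of_subset {d : ℕ} {n : ℕ} {v w : Fin d → ℝ}
    (h : {i | v i ≠ 0} ⊆ {i | w i ≠ 0}) (hw : Sparse n w) : Sparse n v :=
  le_trans (Set.ncard_le_ncard h (Set.toFinite _)) hw

lemma sum_sq_add {ι : Type*} [Fintype ι] (f g : ι → ℝ) :
    ∑ i, (f i + g i) ^ 2 = ∑ i, (f i) ^ 2 + 2 * ∑ i, f i * g i + ∑ i, (g i) ^ 2 := by
  rw [Finset.mul_sum, ← Finset.sum_add_distrib, ← Finset.sum_add_distrib]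
  exact Finset.sum_congr rfl fun i _ => by ring

lemma sum_sq_sub {ι : Type*} [Fintype ι] (f g : ι → ℝ) :
    ∑ i, (f i - g i) ^ 2 = ∑ i, (f i) ^ 2 - 2 * ∑ i, f i * g i + ∑ i, (g i) ^ 2 := by
  rw [Finset.mul_sum, ← Finset.sum_sub_distrib, ← Finset.sum_add_distrib]
  exact Finset.sum_congr rfl fun i _ => by ring

lemma ripInner_weak {m d s : ℕ} {Φ : Matrix (Fin m) (Fin d) ℝ}
    (hΦ : RICq Φ (4 * s) (1 / 10)) (u w : Fin d → ℝ)
    (hsupp : {i | u i ≠ 0 ∨ w i ≠ 0}.ncard ≤ 4 * s) :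
    |Φ.mulVec u ⬝ᵥ Φ.mulVec w - u ⬝ᵥ w| ≤ (1 / 20) * ((l2 u) ^ 2 + (l2 w) ^ 2) := by
  have hsub1 : Sparse (4 * s) (u + w) := by
    refine le_trans (Set.ncard_le_ncard ?_ (Set.toFinite _)) hsupp
    intro i hi
    simp only [Set.mem_setOf_eq, Pi.add_apply] at hi ⊢
    by_contra hc
    push_neg at hc
    simp [hc.1, hc.2] at hi
  have hsub2 : Sparse (4 * s) (u - w) := by
    refine le_trans (Set.ncard_le_ncard ?_ (Set.toFinite _)) hsupp
    intro i hi
    simp only [Set.mem_setOf_eq, Pi.sub_apply] at hi ⊢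
    by_contra hc
    push_neg at hc
    simp [hc.1, hc.2] at hi
  have h1 := hΦ (u + w) hsub1
  have h2 := hΦ (u - w) hsub2
  rw [Matrix.mulVec_add] at h1
  rw [Matrix.mulVec_sub] at h2
  rw [l2_sq, l2_sq] at h1 h2
  have e1 : ∑ i, ((u + w) i) ^ 2
      = ∑ i, (u i) ^ 2 + 2 * (u ⬝ᵥ w) + ∑ i, (w i) ^ 2 := by
    simpa [dotProduct] using sum_sq_add u w
  have e2 : ∑ i, ((u - w) i) ^ 2
      = ∑ i, (u i) ^ 2 - 2 * (u ⬝ᵥ w) + ∑ i, (w i) ^ 2 := by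
    simpa [dotProduct] using sum_sq_sub u w
  have e3 : ∑ i, ((Φ.mulVec u + Φ.mulVec w) i) ^ 2
      = ∑ i, (Φ.mulVec u i) ^ 2 + 2 * (Φ.mulVec u ⬝ᵥ Φ.mulVec w)
        + ∑ i, (Φ.mulVec w i) ^ 2 := by
    simpa [dotProduct] using sum_sq_add (Φ.mulVec u) (Φ.mulVec w)
  have e4 : ∑ i, ((Φ.mulVec u - Φ.mulVec w) i) ^ 2
      = ∑ i, (Φ.mulVec u i) ^ 2 - 2 * (Φ.mulVec u ⬝ᵥ Φ.mulVec w)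
        + ∑ i, (Φ.mulVec w i) ^ 2 := by
    simpa [dotProduct] using sum_sq_sub (Φ.mulVec u) (Φ.mulVec w)
  rw [e1, e3] at h1
  rw [e2, e4] at h2
  rw [l2_sq, l2_sq]
  rw [abs_le]
  constructor <;> nlinarith [h1.1, h1.2, h2.1, h2.2]

lemma ripInner {m d s : ℕ} {Φ : Matrix (Fin m) (Fin d) ℝ}
    (hΦ : RICq Φ (4 * s) (1 / 10)) (u w : Fin d → ℝ)
    (hsupp : {i | u i ≠ 0 ∨ w i ≠ 0}.ncard ≤ 4 * s) :
    |Φ.mulVec u ⬝ᵥ Φ.mulVec w - u ⬝ᵥ w| ≤ (1 / 10) * (l2 u * l2 w) := by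
  rcases eq_or_ne (l2 u) 0 with hu | hu
  · rw [l2_eq_zero hu]
    simp only [Matrix.mulVec_zero, zero_dotProduct, dotProduct_zero,
      sub_zero, abs_zero]
    have h0 : l2 (0 : Fin d → ℝ) = 0 := by simp [l2]
    rw [h0]
    nlinarith [l2_nonneg w]
  rcases eq_or_ne (l2 w) 0 with hw | hw
  · rw [l2_eq_zero hw]
    simp only [Matrix.mulVec_zero, zero_dotProduct, dotProduct_zero,
      sub_zero, abs_zero]
    have h0 : l2 (0 : Fin d → ℝ) = 0 := by simp [l2]
    rw [h0]
    nlinarith [l2_nonneg u]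
  have hu' : 0 < l2 u := lt_of_le_of_ne (l2_nonneg u) (Ne.symm hu)
  have hw' : 0 < l2 w := lt_of_le_of_ne (l2_nonneg w) (Ne.symm hw)
  set a := l2 w with ha
  set b := l2 u with hb
  have hsupp' : {i | (a • u) i ≠ 0 ∨ (b • w) i ≠ 0}.ncard ≤ 4 * s := by
    refine le_trans (Set.ncard_le_ncard ?_ (Set.toFinite _)) hsupp
    intro i hi
    simp only [Set.mem_setOf_eq, Pi.smul_apply, smul_eq_mul] at hi ⊢
    rcases hi with hi | hi
    · exact Or.inl (right_ne_zero_of_mul hi)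
    · exact Or.inr (right_ne_zero_of_mul hi)
  have key := ripInner_weak hΦ (a • u) (b • w) hsupp'
  rw [Matrix.mulVec_smul, Matrix.mulVec_smul, l2_smul, l2_smul] at key
  have hd1 : (a • Φ.mulVec u) ⬝ᵥ (b • Φ.mulVec w)
      = a * b * (Φ.mulVec u ⬝ᵥ Φ.mulVec w) := by
    simp [dotProduct, Finset.mul_sum]
    exact Finset.sum_congr rfl fun i _ => by ring
  have hd2 : (a • u) ⬝ᵥ (b • w) = a * b * (u ⬝ᵥ w) := by
    simp [dotProduct, Finset.mul_sum]
    exact Finset.sum_congr rfl fun i _ => by ring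
  rw [hd1, hd2, ← mul_sub, abs_mul, abs_of_pos (mul_pos hw' hu')] at key
  have habs : |a| = a := abs_of_pos hw'
  have hbabs : |b| = b := abs_of_pos hu'
  rw [habs, hbabs] at key
  -- key : a*b*|X| ≤ 1/20 * ((a*b)^2 + (b*a)^2)
  have hab : 0 < a * b := mul_pos hw' hu'
  nlinarith [key, abs_nonneg (Φ.mulVec u ⬝ᵥ Φ.mulVec w - u ⬝ᵥ w)]

noncomputable def restr {d : ℕ} (T : Finset (Fin d)) (v : Fin d → ℝ) : Fin d → ℝ :=
  fun i => if i ∈ T then v i else 0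

lemma restr_supp {d : ℕ} (T : Finset (Fin d)) (v : Fin d → ℝ) :
    {i | restr T v i ≠ 0} ⊆ ↑T := by
  intro i hi
  simp only [Set.mem_setOf_eq, restr] at hi
  by_cases h : i ∈ T
  · exact Finset.mem_coe.mpr h
  · simp [h] at hi

lemma restr_ncard {d : ℕ} (T : Finset (Fin d)) (v : Fin d → ℝ) :
    {i | restr T v i ≠ 0}.ncard ≤ T.card := by
  have := Set.ncard_le_ncard (restr_supp T v) (Set.toFinite _)
  simpa [Set.ncard_coe_finset] using this

lemma l2_restr_sq {d : ℕ} (T : Finset (Fin d)) (v : Fin d → ℝ) :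
    (l2 (restr T v)) ^ 2 = ∑ i ∈ T, (v i) ^ 2 := by
  rw [l2_sq]
  have : ∀ i, (restr T v i) ^ 2 = if i ∈ T then (v i) ^ 2 else 0 := by
    intro i; simp only [restr]; split <;> simp
  simp only [this]
  rw [Finset.sum_ite_mem, Finset.univ_inter]

/-- key bound for the ΦᵀΦr − r part -/
lemma boundA {m d s : ℕ} {Φ : Matrix (Fin m) (Fin d) ℝ}
    (hΦ : RICq Φ (4 * s) (1 / 10)) {r : Fin d → ℝ} (hr : Sparse (2 * s) r)
    (T : Finset (Fin d)) (hT : T.card ≤ 2 * s) :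
    l2 (restr T (Φ.transpose.mulVec (Φ.mulVec r) - r)) ≤ (1 / 10) * l2 r := by
  set z := restr T (Φ.transpose.mulVec (Φ.mulVec r) - r) with hz
  have hzsq : (l2 z) ^ 2 = Φ.mulVec z ⬝ᵥ Φ.mulVec r - z ⬝ᵥ r := by
    rw [l2_sq]
    have step : ∀ i, (z i) ^ 2 = z i * (Φ.transpose.mulVec (Φ.mulVec r) - r) i := by
      intro i
      by_cases hi : i ∈ T <;> simp [hz, restr, hi, sq]
    calc ∑ i, (z i) ^ 2 = ∑ i, z i * (Φ.transpose.mulVec (Φ.mulVec r) - r) i :=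
          Finset.sum_congr rfl fun i _ => step i
      _ = z ⬝ᵥ Φ.transpose.mulVec (Φ.mulVec r) - z ⬝ᵥ r := by
          simp only [Pi.sub_apply, mul_sub]
          rw [Finset.sum_sub_distrib]; rfl
      _ = Φ.mulVec z ⬝ᵥ Φ.mulVec r - z ⬝ᵥ r := by
          rw [Matrix.dotProduct_mulVec, Matrix.vecMul_transpose]
  have hsupp : {i | z i ≠ 0 ∨ r i ≠ 0}.ncard ≤ 4 * s := by
    have hsub : {i | z i ≠ 0 ∨ r i ≠ 0} ⊆ {i | z i ≠ 0} ∪ {i | r i ≠ 0} := by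
      intro i hi; exact hi
    refine le_trans (Set.ncard_le_ncard hsub (Set.toFinite _)) ?_
    refine le_trans (Set.ncard_union_le _ _) ?_
    have h1 : {i | z i ≠ 0}.ncard ≤ 2 * s := le_trans (restr_ncard T _) hT
    have h2 : {i | r i ≠ 0}.ncard ≤ 2 * s := hr
    omega
  have key := ripInner hΦ z r hsupp
  have h2 : (l2 z) ^ 2 ≤ (1 / 10) * (l2 z * l2 r) := by
    rw [hzsq]
    exact le_trans (le_abs_self _) key
  rcases eq_or_lt_of_le (l2_nonneg z) with h0 | h0
  · rw [← h0]; nlinarith [l2_nonneg r]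
  · nlinarith [l2_nonneg r]

/-- key bound for the Φᵀe part -/
lemma boundB {m d s : ℕ} {Φ : Matrix (Fin m) (Fin d) ℝ}
    (hΦ : RICq Φ (4 * s) (1 / 10)) (e : Fin m → ℝ)
    (T : Finset (Fin d)) (hT : T.card ≤ 2 * s) :
    l2 (restr T (Φ.transpose.mulVec e)) ≤ Real.sqrt (1 + 1 / 10) * l2 e := by
  set z := restr T (Φ.transpose.mulVec e) with hz
  have hzsq : (l2 z) ^ 2 = Φ.mulVec z ⬝ᵥ e := by
    rw [l2_sq]
    have step : ∀ i, (z i) ^ 2 = z i * (Φ.transpose.mulVec e) i := by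
      intro i
      by_cases hi : i ∈ T <;> simp [hz, restr, hi, sq]
    calc ∑ i, (z i) ^ 2 = ∑ i, z i * (Φ.transpose.mulVec e) i :=
          Finset.sum_congr rfl fun i _ => step i
      _ = z ⬝ᵥ Φ.transpose.mulVec e := rfl
      _ = Φ.mulVec z ⬝ᵥ e := by
          rw [Matrix.dotProduct_mulVec, Matrix.vecMul_transpose]
  have hzsparse : Sparse (4 * s) z := by
    refine le_trans (restr_ncard T _) ?_
    omega
  have hrip := (hΦ z hzsparse).2
  have hCS : (Φ.mulVec z ⬝ᵥ e) ^ 2 ≤ (∑ i, (Φ.mulVec z i) ^ 2) * ∑ i, (e i) ^ 2 :=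
    Finset.sum_mul_sq_le_sq_mul_sq Finset.univ _ _
  rw [← l2_sq, ← l2_sq] at hCS
  have hsq : Real.sqrt (1 + 1 / 10) ^ 2 = 1 + 1 / 10 :=
    Real.sq_sqrt (by norm_num)
  have hsqnn : (0:ℝ) ≤ Real.sqrt (1 + 1 / 10) := Real.sqrt_nonneg _
  rcases eq_or_lt_of_le (l2_nonneg z) with h0 | h0
  · rw [← h0]; nlinarith [l2_nonneg e]
  · have h4 : (l2 z) ^ 2 * (l2 z) ^ 2 ≤ ((1 + 1 / 10) * (l2 e) ^ 2) * (l2 z) ^ 2 := by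
      have hm := mul_le_mul_of_nonneg_right hrip (sq_nonneg (l2 e))
      nlinarith [hzsq, hCS, hm]
    have h5 : (l2 z) ^ 2 ≤ (1 + 1 / 10) * (l2 e) ^ 2 := by
      nlinarith [h4, mul_pos h0 h0, h0]
    have hae : 0 ≤ Real.sqrt (1 + 1 / 10) * l2 e := mul_nonneg hsqnn (l2_nonneg e)
    nlinarith [h5, hsq, hae, h0]

/-- **Identification.** Suppose `δ_{4s} ≤ 0.1` (hence also
`δ_{2s} ≤ δ_{4s} ≤ 0.1`). Let `r` be `2s`-sparse, `v = Φr + e`, `y = Φ*v`, and let `Ω`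
be a set of `2s` largest-magnitude coordinates of `y`. Then
`‖r|_{Ω^c}‖₂ ≤ 0.2223 ‖r‖₂ + 2.34 ‖e‖₂`. -/
theorem stmt10 (m d s : ℕ) (hs : 0 < s)
    (Φ : Matrix (Fin m) (Fin d) ℝ) (hΦ : RICq Φ (4 * s) (1 / 10))
    (r : Fin d → ℝ) (hr : Sparse (2 * s) r) (e : Fin m → ℝ)
    (Ω : Finset (Fin d)) (hΩcard : Ω.card = 2 * s)
    (hΩ : ∀ i ∈ Ω, ∀ j ∉ Ω,
      |Φ.transpose.mulVec (Φ.mulVec r + e) j| ≤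
        |Φ.transpose.mulVec (Φ.mulVec r + e) i|) :
    l2 (fun i => if i ∈ Ω then 0 else r i) ≤ 0.2223 * l2 r + 2.34 * l2 e := by
  set y := Φ.transpose.mulVec (Φ.mulVec r + e) with hy
  set R : Finset (Fin d) := Finset.univ.filter (fun i => r i ≠ 0) with hR
  have hRcard : R.card ≤ 2 * s := by
    have h1 : {i | r i ≠ 0}.ncard ≤ 2 * s := hr
    have hco : {i | r i ≠ 0} = ↑R := by ext i; simp [hR]
    rwa [hco, Set.ncard_coe_finset] at h1
  set A := R \ Ω with hA
  set B := Ω \ R with hB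
  have hgoal : (fun i => if i ∈ Ω then 0 else r i) = restr A r := by
    funext i
    by_cases hΩi : i ∈ Ω
    · simp [restr, hA, hΩi]
    · by_cases hRi : i ∈ R
      · simp [restr, hA, hΩi, hRi]
      · have hr0 : r i = 0 := by
          by_contra hc
          exact hRi (by simp [hR, hc])
        simp [restr, hA, hΩi, hRi, hr0]
  rw [hgoal]
  have hAcard : A.card ≤ 2 * s := le_trans (Finset.card_le_card Finset.sdiff_subset) hRcard
  have hBcard : B.card ≤ 2 * s := le_trans (Finset.card_le_card Finset.sdiff_subset) hΩcard.le
  have hABcard : A.card ≤ B.card := by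
    have h1 : A.card + (R ∩ Ω).card = R.card := Finset.card_sdiff_add_card_inter R Ω
    have h2 : B.card + (Ω ∩ R).card = Ω.card := Finset.card_sdiff_add_card_inter Ω R
    have h3 : (R ∩ Ω).card = (Ω ∩ R).card := by rw [Finset.inter_comm]
    omega
  have hydecomp : ∀ i, y i = r i + (Φ.transpose.mulVec (Φ.mulVec r) - r) i
      + (Φ.transpose.mulVec e) i := by
    intro i
    simp only [hy, Matrix.mulVec_add, Pi.add_apply, Pi.sub_apply]
    ring
  have hbA1 := boundA hΦ hr A hAcard
  have hbA2 := boundB hΦ e A hAcard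
  have hbB1 := boundA hΦ hr B hBcard
  have hbB2 := boundB hΦ e B hBcard
  have hAB : ∑ i ∈ A, (y i) ^ 2 ≤ ∑ i ∈ B, (y i) ^ 2 := by
    rcases Finset.eq_empty_or_nonempty B with hBe | hBne
    · have hAe : A = ∅ := by
        rw [← Finset.card_eq_zero]
        have := hABcard
        rw [hBe] at this
        simpa using this
      simp [hAe, hBe]
    · obtain ⟨i0, hi0B, hi0min⟩ := Finset.exists_min_image B (fun i => (y i) ^ 2) hBne
      have hi0Ω : i0 ∈ Ω := (Finset.mem_sdiff.mp hi0B).1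
      have hstep1 : ∑ i ∈ A, (y i) ^ 2 ≤ A.card • ((y i0) ^ 2) := by
        apply Finset.sum_le_card_nsmul
        intro j hj
        have hjΩ : j ∉ Ω := (Finset.mem_sdiff.mp hj).2
        have habs := hΩ i0 hi0Ω j hjΩ
        calc (y j) ^ 2 = |y j| ^ 2 := (sq_abs _).symm
          _ ≤ |y i0| ^ 2 := pow_le_pow_left₀ (abs_nonneg _) habs 2
          _ = (y i0) ^ 2 := sq_abs _
      have hstep2 : B.card • ((y i0) ^ 2) ≤ ∑ i ∈ B, (y i) ^ 2 :=
        Finset.card_nsmul_le_sum B _ _ (fun i hi => hi0min i hi)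
      rw [nsmul_eq_mul] at hstep1 hstep2
      have hc : (A.card : ℝ) * (y i0) ^ 2 ≤ (B.card : ℝ) * (y i0) ^ 2 := by
        apply mul_le_mul_of_nonneg_right _ (sq_nonneg _)
        exact_mod_cast hABcard
      linarith
  have hyAB : l2 (restr A y) ≤ l2 (restr B y) := by
    rw [show l2 (restr A y) = Real.sqrt ((l2 (restr A y)) ^ 2) from
        (Real.sqrt_sq (l2_nonneg _)).symm,
      show l2 (restr B y) = Real.sqrt ((l2 (restr B y)) ^ 2) from
        (Real.sqrt_sq (l2_nonneg _)).symm]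
    apply Real.sqrt_le_sqrt
    rw [l2_restr_sq, l2_restr_sq]
    exact hAB
  have hrA : restr A r = restr A y
      + (-(restr A (Φ.transpose.mulVec (Φ.mulVec r) - r)))
      + (-(restr A (Φ.transpose.mulVec e))) := by
    funext i
    simp only [restr, Pi.add_apply, Pi.neg_apply]
    by_cases hi : i ∈ A
    · simp only [hi, if_true]
      rw [hydecomp i]
      simp only [Pi.sub_apply]
      ring
    · simp [hi]
  have htriA : l2 (restr A r) ≤ l2 (restr A y)
      + l2 (restr A (Φ.transpose.mulVec (Φ.mulVec r) - r))
      + l2 (restr A (Φ.transpose.mulVec e)) := by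
    rw [hrA]
    refine le_trans (l2_add_le _ _) ?_
    have h1 := l2_add_le (restr A y) (-(restr A (Φ.transpose.mulVec (Φ.mulVec r) - r)))
    rw [l2_neg] at h1
    rw [l2_neg]
    linarith
  have hrB0 : restr B r = 0 := by
    funext i
    simp only [restr, Pi.zero_apply]
    by_cases hi : i ∈ B
    · have hiR : i ∉ R := (Finset.mem_sdiff.mp hi).2
      have hr0 : r i = 0 := by
        by_contra hc
        exact hiR (by simp [hR, hc])
      simp [hi, hr0]
    · simp [hi]
  have hyB : restr B y = restr B (Φ.transpose.mulVec (Φ.mulVec r) - r)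
      + restr B (Φ.transpose.mulVec e) := by
    funext i
    simp only [restr, Pi.add_apply]
    by_cases hi : i ∈ B
    · simp only [hi, if_true]
      rw [hydecomp i]
      have hiR : i ∉ R := (Finset.mem_sdiff.mp hi).2
      have hr0 : r i = 0 := by
        by_contra hc
        exact hiR (by simp [hR, hc])
      simp only [Pi.sub_apply, hr0]
      ring
    · simp [hi]
  have htriB : l2 (restr B y) ≤ l2 (restr B (Φ.transpose.mulVec (Φ.mulVec r) - r))
      + l2 (restr B (Φ.transpose.mulVec e)) := by
    rw [hyB]; exact l2_add_le _ _
  have hs17 : Real.sqrt (1 + 1 / 10) ≤ 1.17 := by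
    nlinarith [Real.sq_sqrt (show (0:ℝ) ≤ 1 + 1 / 10 by norm_num),
      Real.sqrt_nonneg (1 + 1 / 10 : ℝ)]
  nlinarith [htriA, htriB, hyAB, hbA1, hbA2, hbB1, hbB2, hs17, l2_nonneg r, l2_nonneg e]
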